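/- Let Ω be a nonempty open convex subset of ℝⁿ and let F be a Taylorian 1-field on Ω. Then Γ¹(F;Ω) ≤ 2·Lip(Df;Ω). -/

import Mathlib

noncomputable section

open scoped RealInnerProductSpace

section GammaDefs

variable {H : Type*} [NormedAddCommGroup H] [InnerProductSpace ℝ H]

/-- Evaluation of the first-degree polynomial `F(x)` at `a`:
`F(x)(a) = f_x + ⟨D_xf, a - x⟩`. -/
def fieldEval (f : H → ℝ) (Df : H → H) (x a : H) : ℝ :=
  f x + ⟪Df x, a - x⟫

/-- `Γ¹(F; x, y) = 2 · sup_{a} |F(x)(a) - F(y)(a)| / (‖x-a‖² + ‖y-a‖²)` for `x ≠ y`. -/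
def gammaPair (f : H → ℝ) (Df : H → H) (x y : H) : ℝ :=
  ⨆ a : H, 2 * |fieldEval f Df x a - fieldEval f Df y a| / (‖x - a‖ ^ 2 + ‖y - a‖ ^ 2)

/-- The set of values `Γ¹(F; x, y)` for `x ≠ y` ranging over `S`. -/
def gammaVals (f : H → ℝ) (Df : H → H) (S : Set H) : Set ℝ :=
  {t | ∃ x ∈ S, ∃ y ∈ S, x ≠ y ∧ t = gammaPair f Df x y}

/-- `Γ¹(F; S) = sup_{x ≠ y ∈ S} Γ¹(F; x, y)` (real supremum, `0` if `S` has at most one point). -/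
def gammaOn (f : H → ℝ) (Df : H → H) (S : Set H) : ℝ :=
  sSup (gammaVals f Df S)

end GammaDefs

section LipDefs

variable {α β : Type*} [NormedAddCommGroup α] [NormedAddCommGroup β]

/-- The set of difference quotients `‖g x - g y‖ / ‖x - y‖`, `x ≠ y ∈ S`. -/
def lipVals (g : α → β) (S : Set α) : Set ℝ :=
  {t | ∃ x ∈ S, ∃ y ∈ S, x ≠ y ∧ t = ‖g x - g y‖ / ‖x - y‖}

/-- `Lip(g; S) = sup_{x ≠ y ∈ S} ‖g x - g y‖ / ‖x - y‖` (real supremum). -/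
def lipOn (g : α → β) (S : Set α) : ℝ :=
  sSup (lipVals g S)

end LipDefs

section PsiDefs

variable {H : Type*} [NormedAddCommGroup H] [InnerProductSpace ℝ H]

/-- `v_{a,b} = ½(D_af + D_bf) + (κ/2)(b - a)`. -/
def vab (Df : H → H) (κ : ℝ) (a b : H) : H :=
  (1 / 2 : ℝ) • (Df a + Df b) + (κ / 2) • (b - a)

/-- `α_{a,b}`. -/
def alphaab (f : H → ℝ) (Df : H → H) (κ : ℝ) (a b : H) : ℝ :=
  2 * κ * (f a - f b) + κ * ⟪Df a + Df b, b - a⟫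
    - 1 / 2 * ‖Df a - Df b‖ ^ 2 + κ ^ 2 / 2 * ‖a - b‖ ^ 2

/-- `β_{a,b}(x)`. -/
def betaab (Df : H → H) (κ : ℝ) (a b x : H) : ℝ :=
  ‖(1 / 2 : ℝ) • (Df a - Df b) + (κ / 2) • ((2 : ℝ) • x - a - b)‖ ^ 2

/-- `r_{a,b}(x) = √(α_{a,b} + β_{a,b}(x))`. -/
def rab (f : H → ℝ) (Df : H → H) (κ : ℝ) (a b x : H) : ℝ :=
  Real.sqrt (alphaab f Df κ a b + betaab Df κ a b x)

/-- `Λ_x = {v : ‖v - v_{a,b}‖ ≤ r_{a,b}(x) for all a, b ∈ Ω}`. -/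
def Lambda (f : H → ℝ) (Df : H → H) (κ : ℝ) (Ω : Set H) (x : H) : Set H :=
  {v | ∀ a ∈ Ω, ∀ b ∈ Ω, ‖v - vab Df κ a b‖ ≤ rab f Df κ a b x}

/-- `Ψ⁺(F, x, a, v)`. -/
def PsiPlus (f : H → ℝ) (Df : H → H) (κ : ℝ) (x a v : H) : ℝ :=
  f a + 1 / 2 * ⟪Df a + v, x - a⟫ + κ / 4 * ‖a - x‖ ^ 2 - 1 / (4 * κ) * ‖Df a - v‖ ^ 2

/-- `Ψ⁻(F, x, a, v)`. -/
def PsiMinus (f : H → ℝ) (Df : H → H) (κ : ℝ) (x a v : H) : ℝ :=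
  f a + 1 / 2 * ⟪Df a + v, x - a⟫ - κ / 4 * ‖a - x‖ ^ 2 + 1 / (4 * κ) * ‖Df a - v‖ ^ 2

/-- `inf_{a ∈ Ω} Ψ⁺(F, x, a, v)`. -/
def infPsiPlus (f : H → ℝ) (Df : H → H) (κ : ℝ) (Ω : Set H) (x v : H) : ℝ :=
  sInf {t | ∃ a ∈ Ω, t = PsiPlus f Df κ x a v}

/-- `sup_{a ∈ Ω} Ψ⁻(F, x, a, v)`. -/
def supPsiMinus (f : H → ℝ) (Df : H → H) (κ : ℝ) (Ω : Set H) (x v : H) : ℝ :=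
  sSup {t | ∃ a ∈ Ω, t = PsiMinus f Df κ x a v}

/-- `u⁺(x) = sup_{v ∈ Λ_x} inf_{a ∈ Ω} Ψ⁺(F, x, a, v)`. -/
def uPlus (f : H → ℝ) (Df : H → H) (κ : ℝ) (Ω : Set H) (x : H) : ℝ :=
  sSup {t | ∃ v ∈ Lambda f Df κ Ω x, t = infPsiPlus f Df κ Ω x v}

/-- `u⁻(x) = inf_{v ∈ Λ_x} sup_{a ∈ Ω} Ψ⁻(F, x, a, v)`. -/
def uMinus (f : H → ℝ) (Df : H → H) (κ : ℝ) (Ω : Set H) (x : H) : ℝ :=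
  sInf {t | ∃ v ∈ Lambda f Df κ Ω x, t = supPsiMinus f Df κ Ω x v}

/-- `(g, Dg)` is a minimal Lipschitz extension of the 1-field `(f, Df)` of domain `Ω` to `H`. -/
def IsMLE (f : H → ℝ) (Df : H → H) (Ω : Set H) (g : H → ℝ) (Dg : H → H) : Prop :=
  (∀ x ∈ Ω, g x = f x ∧ Dg x = Df x) ∧ gammaOn g Dg Set.univ = gammaOn f Df Ω

/-- Over extremal MLE. -/
def IsOverExtremal (f : H → ℝ) (Df : H → H) (Ω : Set H) (g₁ : H → ℝ) (Dg₁ : H → H) : Prop :=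
  IsMLE f Df Ω g₁ Dg₁ ∧ ∀ g Dg, IsMLE f Df Ω g Dg → ∀ x, g x ≤ g₁ x

/-- Under extremal MLE. -/
def IsUnderExtremal (f : H → ℝ) (Df : H → H) (Ω : Set H) (g₂ : H → ℝ) (Dg₂ : H → H) : Prop :=
  IsMLE f Df Ω g₂ Dg₂ ∧ ∀ g Dg, IsMLE f Df Ω g Dg → ∀ x, g₂ x ≤ g x

/-- Absolutely minimal Lipschitz extension. -/
def IsAMLE (f : H → ℝ) (Df : H → H) (Ω : Set H) (g : H → ℝ) (Dg : H → H) : Prop :=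
  IsMLE f Df Ω g Dg ∧
    ∀ V : Set H, V.Nonempty → IsOpen V → Bornology.IsBounded V → closure V ⊆ Ωᶜ →
      gammaOn g Dg V = gammaOn g Dg (frontier V)

end PsiDefs

section AuxProof
open Topology
variable {H : Type*} [NormedAddCommGroup H] [InnerProductSpace ℝ H]

lemma denom_eq' (x y a : H) :
    ‖x-a‖^2 + ‖y-a‖^2 = 2*‖a - (1/2:ℝ)•(x+y)‖^2 + ‖x-y‖^2/2 := by
  have h := parallelogram_law_with_norm ℝ (x - a) (y - a)
  have h1 : x - a + (y - a) = (2:ℝ) • ((1/2:ℝ)•(x+y) - a) := by module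
  have h2 : x - a - (y - a) = x - y := by abel
  rw [h1, h2, norm_smul] at h
  rw [show ‖a - (1/2:ℝ)•(x+y)‖ = ‖(1/2:ℝ)•(x+y) - a‖ from norm_sub_rev _ _]
  simp only [Real.norm_ofNat] at h
  nlinarith [h]

lemma delta_decomp' (f : H → ℝ) (Df : H → H) (x y a : H) :
    fieldEval f Df x a - fieldEval f Df y a
      = (f x - f y - ⟪(1/2:ℝ) • (Df x + Df y), x - y⟫) + ⟪Df x - Df y, a - (1/2:ℝ)•(x+y)⟫ := by
  simp only [fieldEval, inner_sub_left, inner_sub_right, inner_add_left, inner_add_right,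
    real_inner_smul_left, real_inner_smul_right]
  ring

lemma denom_pos' {x y : H} (hxy : x ≠ y) (a : H) : 0 < ‖x-a‖^2 + ‖y-a‖^2 := by
  have hd : 0 < ‖x - y‖ := by
    rw [norm_pos_iff]; exact sub_ne_zero.mpr hxy
  rw [denom_eq' x y a]
  nlinarith [sq_nonneg ‖a - (1/2:ℝ)•(x+y)‖]

lemma range_bdd' (f : H → ℝ) (Df : H → H) {x y : H} (hxy : x ≠ y) :
    BddAbove (Set.range fun a : H =>
      2 * |fieldEval f Df x a - fieldEval f Df y a| / (‖x - a‖ ^ 2 + ‖y - a‖ ^ 2)) := by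
  set m := (1/2:ℝ)•(x+y) with hm
  set d := ‖x - y‖ with hdd
  set A := |fieldEval f Df x m - fieldEval f Df y m| with hA
  set S := ‖Df x - Df y‖ with hS
  have hd : 0 < d := by rw [hdd, norm_pos_iff]; exact sub_ne_zero.mpr hxy
  refine ⟨(4*A)/d^2 + S/d, ?_⟩
  rintro t ⟨a, rfl⟩
  have hden : 0 < ‖x-a‖^2 + ‖y-a‖^2 := denom_pos' hxy a
  set r := ‖a - m‖ with hr
  have hrdef : ‖x-a‖^2 + ‖y-a‖^2 = 2*r^2 + d^2/2 := denom_eq' x y a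
  have habs : |fieldEval f Df x a - fieldEval f Df y a| ≤ A + S*r := by
    have h1 := delta_decomp' f Df x y a
    have h2 := delta_decomp' f Df x y m
    rw [← hm] at h1 h2
    have h2' : fieldEval f Df x a - fieldEval f Df y a
        = (fieldEval f Df x m - fieldEval f Df y m) + ⟪Df x - Df y, a - m⟫ := by
      rw [h1, h2]; simp
    rw [h2']
    exact (abs_add_le _ _).trans (add_le_add le_rfl (abs_real_inner_le_norm _ _))
  rw [div_le_iff₀ hden, hrdef]
  have hA0 : 0 ≤ A := abs_nonneg _
  have hS0 : 0 ≤ S := norm_nonneg _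
  have hr0 : 0 ≤ r := norm_nonneg _
  have hd2 : 0 < d^2 := by positivity
  have hC : ((4*A)/d^2 + S/d) * (2*r^2 + d^2/2) * d^2
      = (4*A + S*d) * (2*r^2 + d^2/2) := by field_simp
  have key : 2*(A + S*r) * d^2 ≤ (4*A + S*d) * (2*r^2 + d^2/2) := by
    nlinarith [mul_nonneg (mul_nonneg hS0 hd.le) (sq_nonneg (d - 2*r)),
      mul_nonneg hA0 (sq_nonneg (d-2*r)), mul_nonneg hA0 (sq_nonneg r), sq_nonneg d]
  have h5 : 2*|fieldEval f Df x a - fieldEval f Df y a| * d^2 ≤ 2*(A + S*r) * d^2 :=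
    mul_le_mul_of_nonneg_right (by linarith) hd2.le
  have final : 2*|fieldEval f Df x a - fieldEval f Df y a| * d^2
      ≤ ((4*A)/d^2 + S/d) * (2*r^2 + d^2/2) * d^2 := by
    rw [hC]; exact h5.trans key
  exact le_of_mul_le_mul_right final hd2

lemma pair_le' (f : H → ℝ) (Df : H → H) (Ω : Set H) (hTay : BddAbove (gammaVals f Df Ω))
    {x y : H} (hx : x ∈ Ω) (hy : y ∈ Ω) (hxy : x ≠ y) (a : H) :
    2 * |fieldEval f Df x a - fieldEval f Df y a| / (‖x - a‖ ^ 2 + ‖y - a‖ ^ 2)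
      ≤ gammaOn f Df Ω := by
  have h1 : 2 * |fieldEval f Df x a - fieldEval f Df y a| / (‖x - a‖ ^ 2 + ‖y - a‖ ^ 2)
      ≤ gammaPair f Df x y := le_ciSup (range_bdd' f Df hxy) a
  exact h1.trans (le_csSup hTay ⟨x, hx, y, hy, hxy, rfl⟩)

lemma delta_le' (f : H → ℝ) (Df : H → H) (Ω : Set H) (hTay : BddAbove (gammaVals f Df Ω))
    {x y : H} (hx : x ∈ Ω) (hy : y ∈ Ω) (hxy : x ≠ y) (a : H) :
    2 * |fieldEval f Df x a - fieldEval f Df y a|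
      ≤ gammaOn f Df Ω * (‖x - a‖ ^ 2 + ‖y - a‖ ^ 2) := by
  have h := pair_le' f Df Ω hTay hx hy hxy a
  have hden := denom_pos' hxy a
  rw [div_le_iff₀ hden] at h
  linarith [h]

lemma gammaOn_nonneg' (f : H → ℝ) (Df : H → H) (Ω : Set H) : 0 ≤ gammaOn f Df Ω := by
  apply Real.sSup_nonneg
  rintro t ⟨x, hx, y, hy, hxy, rfl⟩
  apply Real.iSup_nonneg
  intro a
  positivity

lemma lip_bdd' (f : H → ℝ) (Df : H → H) (Ω : Set H) (hTay : BddAbove (gammaVals f Df Ω)) :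
    BddAbove (lipVals Df Ω) := by
  set K := gammaOn f Df Ω with hK
  have hK0 : 0 ≤ K := gammaOn_nonneg' f Df Ω
  refine ⟨5/4 * K, ?_⟩
  rintro t ⟨x, hx, y, hy, hxy, rfl⟩
  set m := (1/2:ℝ)•(x+y) with hm
  set s := Df x - Df y with hs
  set d := ‖x - y‖ with hdd
  have hd : 0 < d := by rw [hdd, norm_pos_iff]; exact sub_ne_zero.mpr hxy
  rw [div_le_iff₀ hd]
  by_cases hs0 : s = (0:H)
  · rw [hs0]; simp only [norm_zero]; positivity
  · have hsn : 0 < ‖s‖ := norm_pos_iff.mpr hs0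
    set c := d / ‖s‖ with hc
    have hc0 : 0 < c := div_pos hd hsn
    have hnorm : ∀ ε : ℝ, ‖(m + (ε*c)•s) - m‖ = |ε| * d := by
      intro ε
      rw [show (m + (ε*c)•s) - m = (ε*c)•s by abel, norm_smul, Real.norm_eq_abs,
        abs_mul, abs_of_pos hc0, hc]
      field_simp
    have hinner : ∀ ε : ℝ, ⟪s, (m + (ε*c)•s) - m⟫ = ε * (d * ‖s‖) := by
      intro ε
      rw [show (m + (ε*c)•s) - m = (ε*c)•s by abel, real_inner_smul_right,
        real_inner_self_eq_norm_sq, hc]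
      field_simp
    have hdelta : ∀ ε : ℝ, fieldEval f Df x (m + (ε*c)•s) - fieldEval f Df y (m + (ε*c)•s)
        = (fieldEval f Df x m - fieldEval f Df y m) + ε * (d * ‖s‖) := by
      intro ε
      have h1 := delta_decomp' f Df x y (m + (ε*c)•s)
      have h2 := delta_decomp' f Df x y m
      rw [← hm] at h1 h2
      rw [h1, h2, ← hs, hinner ε]
      simp
    have hden : ∀ ε : ℝ, ‖x - (m + (ε*c)•s)‖^2 + ‖y - (m + (ε*c)•s)‖^2
        = 2*(|ε| * d)^2 + d^2/2 := by
      intro ε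
      rw [denom_eq' x y (m + (ε*c)•s), ← hm, hnorm ε, ← hdd]
    have h1 := delta_le' f Df Ω hTay hx hy hxy (m + ((1:ℝ)*c)•s)
    have h2 := delta_le' f Df Ω hTay hx hy hxy (m + ((-1:ℝ)*c)•s)
    rw [hden 1, hdelta 1] at h1
    rw [hden (-1), hdelta (-1)] at h2
    simp only [abs_one, abs_neg, one_mul] at h1 h2
    set A := fieldEval f Df x m - fieldEval f Df y m with hA
    have e1 : |A + d * ‖s‖| ≤ K * (2*d^2 + d^2/2) / 2 := by nlinarith [h1]
    have e2 : |A + (-1) * (d * ‖s‖)| ≤ K * (2*d^2 + d^2/2) / 2 := by nlinarith [h2]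
    have e3 : 2 * (d * ‖s‖) ≤ |A + d*‖s‖| + |A + (-1)*(d*‖s‖)| := by
      have := abs_sub_abs_le_abs_sub (A + d*‖s‖) (A + (-1)*(d*‖s‖))
      have h4 : |(A + d*‖s‖) - (A + (-1)*(d*‖s‖))| = 2*(d*‖s‖) := by
        rw [show (A + d*‖s‖) - (A + (-1)*(d*‖s‖)) = 2*(d*‖s‖) by ring]
        exact abs_of_nonneg (by positivity)
      calc 2*(d*‖s‖) = |(A + d*‖s‖) - (A + (-1)*(d*‖s‖))| := h4.symm
        _ ≤ |A + d*‖s‖| + |A + (-1)*(d*‖s‖)| := abs_sub _ _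
    nlinarith [e1, e2, e3, sq_nonneg d]

lemma lipOn_nonneg' (Df : H → H) (Ω : Set H) : 0 ≤ lipOn Df Ω := by
  apply Real.sSup_nonneg
  rintro t ⟨x, hx, y, hy, hxy, rfl⟩
  positivity

lemma lip_le' {Df : H → H} {Ω : Set H} (hb : BddAbove (lipVals Df Ω))
    {x y : H} (hx : x ∈ Ω) (hy : y ∈ Ω) : ‖Df x - Df y‖ ≤ lipOn Df Ω * ‖x - y‖ := by
  by_cases hxy : x = y
  · subst hxy; simp
  · have hd : 0 < ‖x - y‖ := norm_pos_iff.mpr (sub_ne_zero.mpr hxy)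
    have h := le_csSup hb (show ‖Df x - Df y‖ / ‖x - y‖ ∈ lipVals Df Ω from
      ⟨x, hx, y, hy, hxy, rfl⟩)
    rw [div_le_iff₀ hd] at h
    simpa [lipOn] using h

lemma taylor_bound' (f : H → ℝ) (Df : H → H) (Ω : Set H)
    (hTay : BddAbove (gammaVals f Df Ω)) {x y : H} (hx : x ∈ Ω) (hy : y ∈ Ω) :
    |f y - f x - ⟪Df x, y - x⟫| ≤ gammaOn f Df Ω / 2 * ‖y - x‖ ^ 2 := by
  by_cases hxy : y = x
  · subst hxy; simp
  · have h := delta_le' f Df Ω hTay hy hx hxy y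
    have e1 : fieldEval f Df y y - fieldEval f Df x y = f y - f x - ⟪Df x, y - x⟫ := by
      simp [fieldEval]; ring
    have e2 : ‖y - y‖ ^ 2 + ‖x - y‖ ^ 2 = ‖y - x‖ ^ 2 := by
      rw [norm_sub_rev x y]; simp
    rw [e1, e2] at h
    linarith [h]

lemma hasfderiv' (f : H → ℝ) (Df : H → H) (Ω : Set H) (hΩop : IsOpen Ω)
    (hTay : BddAbove (gammaVals f Df Ω)) {x : H} (hx : x ∈ Ω) :
    HasFDerivAt f (innerSL ℝ (Df x)) x := by
  set K := gammaOn f Df Ω with hK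
  have hK0 : 0 ≤ K := gammaOn_nonneg' f Df Ω
  rw [hasFDerivAt_iff_isLittleO_nhds_zero, Asymptotics.isLittleO_iff]
  intro c hc
  have hδ : 0 < c / (K / 2 + 1) := by positivity
  have hmem : {h : H | x + h ∈ Ω} ∈ 𝓝 (0:H) := by
    have : ContinuousAt (fun h : H => x + h) 0 := (continuous_const.add continuous_id).continuousAt
    exact this.preimage_mem_nhds (by simpa using hΩop.mem_nhds hx)
  filter_upwards [hmem, Metric.ball_mem_nhds (0:H) hδ] with h hyΩ hyb
  have hb := taylor_bound' f Df Ω hTay hx hyΩ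
  rw [Metric.mem_ball, dist_eq_norm, sub_zero] at hyb
  have hyx : x + h - x = h := by abel
  rw [hyx] at hb
  simp only [innerSL_apply_apply, Real.norm_eq_abs]
  calc |f (x + h) - f x - ⟪Df x, h⟫| ≤ K / 2 * ‖h‖ ^ 2 := hb
    _ ≤ c * ‖h‖ := by
        have h1 : K / 2 * ‖h‖ ≤ c := by
          have h2 : K / 2 * ‖h‖ ≤ K / 2 * (c / (K/2+1)) :=
            mul_le_mul_of_nonneg_left hyb.le (by positivity)
          have h3 : K / 2 * (c / (K/2+1)) ≤ c := by
            rw [← mul_div_assoc, div_le_iff₀ (by positivity : (0:ℝ) < K/2+1)]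
            nlinarith [hc]
          linarith
        nlinarith [norm_nonneg h, h1]

lemma Ebound' (f : H → ℝ) (Df : H → H) (Ω : Set H) (hΩop : IsOpen Ω) (hΩconv : Convex ℝ Ω)
    (hTay : BddAbove (gammaVals f Df Ω)) (hb : BddAbove (lipVals Df Ω))
    {x y : H} (hx : x ∈ Ω) (hy : y ∈ Ω) :
    |f x - f y - ⟪(1/2:ℝ) • (Df x + Df y), x - y⟫| ≤ lipOn Df Ω / 3 * ‖x - y‖ ^ 2 := by
  set M := lipOn Df Ω with hM
  have hM0 : 0 ≤ M := lipOn_nonneg' Df Ω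
  set z : ℝ → H := fun t => x + t • (y - x) with hz
  have hzΩ : ∀ t ∈ Set.Icc (0:ℝ) 1, z t ∈ Ω := by
    intro t ht
    have h1 := hΩconv hx hy (by linarith [ht.2] : (0:ℝ) ≤ 1 - t) ht.1 (by ring)
    have h2 : (1-t) • x + t • y = z t := by rw [hz]; module
    rwa [h2] at h1
  set φ : ℝ → ℝ := fun t => ⟪Df (z t), y - x⟫ with hφ
  have hzsub : ∀ s t : ℝ, z s - z t = (s - t) • (y - x) := by
    intro s t; rw [hz]; module
  have hDfz : ContinuousOn (fun t => Df (z t)) (Set.Icc (0:ℝ) 1) := by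
    apply LipschitzOnWith.continuousOn (K := (M * ‖y - x‖).toNNReal)
    apply LipschitzOnWith.of_dist_le_mul
    intro s hs t ht
    rw [dist_eq_norm, dist_eq_norm]
    calc ‖Df (z s) - Df (z t)‖ ≤ M * ‖z s - z t‖ := lip_le' hb (hzΩ s hs) (hzΩ t ht)
      _ = M * ‖y - x‖ * ‖s - t‖ := by
          rw [hzsub s t, norm_smul]; ring
      _ ≤ (M * ‖y - x‖).toNNReal * ‖s - t‖ := by
          apply mul_le_mul_of_nonneg_right _ (norm_nonneg _)
          exact Real.le_coe_toNNReal _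
  have hφcont : ContinuousOn φ (Set.Icc (0:ℝ) 1) := hDfz.inner continuousOn_const
  have huIcc : Set.uIcc (0:ℝ) 1 = Set.Icc (0:ℝ) 1 := Set.uIcc_of_le (by norm_num)
  have hint : IntervalIntegrable φ MeasureTheory.volume 0 1 :=
    (huIcc ▸ hφcont).intervalIntegrable
  have hderiv : ∀ t ∈ Set.uIcc (0:ℝ) 1, HasDerivAt (fun u => f (z u)) (φ t) t := by
    intro t ht
    rw [huIcc] at ht
    have h1 : HasDerivAt z (y - x) t := by
      simpa [hz] using ((hasDerivAt_id t).smul_const (y - x)).const_add x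
    have h2 := hasfderiv' f Df Ω hΩop hTay (hzΩ t ht)
    have h3 := h2.comp_hasDerivAt t h1
    simpa [hφ, Function.comp_def] using h3
  have hFTC : ∫ t in (0:ℝ)..1, φ t = f y - f x := by
    rw [intervalIntegral.integral_eq_sub_of_hasDerivAt hderiv hint]
    have e1 : z 1 = y := by rw [hz]; simp
    have e0 : z 0 = x := by rw [hz]; simp
    rw [e1, e0]
  set c0 : ℝ := ⟪Df x, y - x⟫ with hc0
  set c1 : ℝ := ⟪Df y, y - x⟫ with hc1
  set ψ : ℝ → ℝ := fun t => φ t - ((1-t)*c0 + t*c1) with hψ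
  have hpolyc : Continuous (fun t : ℝ => (1-t)*c0 + t*c1) := by fun_prop
  have hpoly : IntervalIntegrable (fun t : ℝ => (1-t)*c0 + t*c1) MeasureTheory.volume 0 1 :=
    hpolyc.intervalIntegrable 0 1
  have hψint : IntervalIntegrable ψ MeasureTheory.volume 0 1 := hint.sub hpoly
  have hlin : ∫ t in (0:ℝ)..1, ((1-t)*c0 + t*c1) = (c0 + c1)/2 := by
    have e : (fun t : ℝ => (1-t)*c0 + t*c1) = fun t : ℝ => c0 + (c1 - c0) * t := by
      funext t; ring
    have i1 : IntervalIntegrable (fun _ : ℝ => c0) MeasureTheory.volume 0 1 :=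
      intervalIntegrable_const
    have i2 : IntervalIntegrable (fun t : ℝ => (c1 - c0) * t) MeasureTheory.volume 0 1 := by
      apply Continuous.intervalIntegrable; fun_prop
    rw [e, intervalIntegral.integral_add i1 i2,
      intervalIntegral.integral_const_mul, integral_id, intervalIntegral.integral_const]
    norm_num; ring
  have hψval : ∫ t in (0:ℝ)..1, ψ t = (f y - f x) - (c0 + c1)/2 := by
    rw [hψ]
    rw [intervalIntegral.integral_sub hint hpoly, hFTC, hlin]
  have hpt : ∀ t ∈ Set.Icc (0:ℝ) 1, |ψ t| ≤ 2*t*(1-t)*(M*‖y-x‖^2) := by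
    intro t ht
    obtain ⟨ht0, ht1⟩ := ht
    have hza : |φ t - c0| ≤ M * t * ‖y-x‖^2 := by
      have e : φ t - c0 = ⟪Df (z t) - Df x, y - x⟫ := by
        rw [hφ, hc0, inner_sub_left]
      rw [e]
      have h4 : ‖Df (z t) - Df x‖ ≤ M * (t * ‖y - x‖) := by
        have h5 := lip_le' hb (hzΩ t ⟨ht0, ht1⟩) hx
        have h6 : ‖z t - x‖ = t * ‖y - x‖ := by
          rw [show z t - x = t • (y - x) by rw [hz]; module, norm_smul,
            Real.norm_eq_abs, abs_of_nonneg ht0]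
        rwa [h6] at h5
      calc |⟪Df (z t) - Df x, y - x⟫| ≤ ‖Df (z t) - Df x‖ * ‖y - x‖ :=
            abs_real_inner_le_norm _ _
        _ ≤ M * (t * ‖y - x‖) * ‖y - x‖ :=
            mul_le_mul_of_nonneg_right h4 (norm_nonneg _)
        _ = M * t * ‖y-x‖^2 := by ring
    have hzb : |φ t - c1| ≤ M * (1-t) * ‖y-x‖^2 := by
      have e : φ t - c1 = ⟪Df (z t) - Df y, y - x⟫ := by
        rw [hφ, hc1, inner_sub_left]
      rw [e]
      have h4 : ‖Df (z t) - Df y‖ ≤ M * ((1-t) * ‖y - x‖) := by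
        have h5 := lip_le' hb (hzΩ t ⟨ht0, ht1⟩) hy
        have h6 : ‖z t - y‖ = (1-t) * ‖y - x‖ := by
          rw [show z t - y = (t-1) • (y - x) by rw [hz]; module, norm_smul,
            Real.norm_eq_abs, abs_of_nonpos (by linarith)]
          ring
        rwa [h6] at h5
      calc |⟪Df (z t) - Df y, y - x⟫| ≤ ‖Df (z t) - Df y‖ * ‖y - x‖ :=
            abs_real_inner_le_norm _ _
        _ ≤ M * ((1-t) * ‖y - x‖) * ‖y - x‖ :=
            mul_le_mul_of_nonneg_right h4 (norm_nonneg _)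
        _ = M * (1-t) * ‖y-x‖^2 := by ring
    have e : ψ t = (1-t)*(φ t - c0) + t*(φ t - c1) := by rw [hψ]; ring
    rw [e]
    calc |(1-t)*(φ t - c0) + t*(φ t - c1)|
        ≤ |(1-t)*(φ t - c0)| + |t*(φ t - c1)| := abs_add_le _ _
      _ = (1-t)*|φ t - c0| + t*|φ t - c1| := by
          rw [abs_mul, abs_mul, abs_of_nonneg (by linarith : (0:ℝ) ≤ 1-t),
            abs_of_nonneg ht0]
      _ ≤ (1-t)*(M * t * ‖y-x‖^2) + t*(M * (1-t) * ‖y-x‖^2) := by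
          apply add_le_add
          · exact mul_le_mul_of_nonneg_left hza (by linarith)
          · exact mul_le_mul_of_nonneg_left hzb ht0
      _ = 2*t*(1-t)*(M*‖y-x‖^2) := by ring
  have hbndint : IntervalIntegrable (fun t : ℝ => 2*t*(1-t)*(M*‖y-x‖^2))
      MeasureTheory.volume 0 1 := by
    apply Continuous.intervalIntegrable; fun_prop
  have h6 : |∫ t in (0:ℝ)..1, ψ t| ≤ ∫ t in (0:ℝ)..1, |ψ t| :=
    intervalIntegral.abs_integral_le_integral_abs (by norm_num)
  have h7 : ∫ t in (0:ℝ)..1, |ψ t| ≤ ∫ t in (0:ℝ)..1, 2*t*(1-t)*(M*‖y-x‖^2) :=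
    intervalIntegral.integral_mono_on (by norm_num) hψint.abs hbndint hpt
  have h8 : ∫ t in (0:ℝ)..1, 2*t*(1-t)*(M*‖y-x‖^2) = M*‖y-x‖^2/3 := by
    have e : (fun t : ℝ => 2*t*(1-t)*(M*‖y-x‖^2))
        = fun t : ℝ => (2*(M*‖y-x‖^2))*t - (2*(M*‖y-x‖^2))*t^2 := by
      funext t; ring
    have i3 : IntervalIntegrable (fun t : ℝ => (2*(M*‖y-x‖^2))*t) MeasureTheory.volume 0 1 := by
      apply Continuous.intervalIntegrable; fun_prop
    have i4 : IntervalIntegrable (fun t : ℝ => (2*(M*‖y-x‖^2))*t^2) MeasureTheory.volume 0 1 := by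
      apply Continuous.intervalIntegrable; fun_prop
    rw [e, intervalIntegral.integral_sub i3 i4,
      intervalIntegral.integral_const_mul, intervalIntegral.integral_const_mul,
      integral_id, integral_pow]
    norm_num
    ring
  have hfinal : |(f y - f x) - (c0 + c1)/2| ≤ M*‖y-x‖^2/3 := by
    rw [← hψval]
    exact h6.trans (h7.trans_eq h8)
  have hE : f x - f y - ⟪(1/2:ℝ) • (Df x + Df y), x - y⟫ = -((f y - f x) - (c0 + c1)/2) := by
    rw [hc0, hc1]
    simp only [inner_smul_left, inner_add_left, inner_sub_right, inner_neg_right,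
      real_inner_smul_left, starRingEnd_apply, star_trivial]
    ring
  rw [hE, abs_neg, norm_sub_rev x y]
  calc |(f y - f x) - (c0 + c1)/2| ≤ M*‖y-x‖^2/3 := hfinal
    _ = M/3 * ‖y-x‖^2 := by ring

end AuxProof

/-- If `Ω ⊆ ℝⁿ` is nonempty, open and convex and `F = (f, Df)` is a
Taylorian 1-field on `Ω`, then `Γ¹(F;Ω) ≤ 2 Lip(Df;Ω)`. -/
theorem stmt_2 {n : ℕ} (hn : 1 ≤ n) (Ω : Set (EuclideanSpace ℝ (Fin n)))
    (hΩne : Ω.Nonempty) (hΩop : IsOpen Ω) (hΩconv : Convex ℝ Ω)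
    (f : EuclideanSpace ℝ (Fin n) → ℝ)
    (Df : EuclideanSpace ℝ (Fin n) → EuclideanSpace ℝ (Fin n))
    (hTay : BddAbove (gammaVals f Df Ω)) :
    gammaOn f Df Ω ≤ 2 * lipOn Df Ω := by
  have hb : BddAbove (lipVals Df Ω) := lip_bdd' f Df Ω hTay
  set M := lipOn Df Ω with hM
  have hM0 : 0 ≤ M := lipOn_nonneg' Df Ω
  show sSup (gammaVals f Df Ω) ≤ 2 * M
  apply Real.sSup_le _ (by positivity)
  rintro t ⟨x, hx, y, hy, hxy, rfl⟩
  show (⨆ a, 2 * |fieldEval f Df x a - fieldEval f Df y a| / (‖x - a‖ ^ 2 + ‖y - a‖ ^ 2))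
      ≤ 2 * M
  apply Real.iSup_le _ (by positivity)
  intro a
  have hden := denom_pos' hxy a
  rw [div_le_iff₀ hden]
  have hd : 0 < ‖x - y‖ := norm_pos_iff.mpr (sub_ne_zero.mpr hxy)
  have hdecomp := delta_decomp' f Df x y a
  have hE := Ebound' f Df Ω hΩop hΩconv hTay hb hx hy
  have hs := lip_le' hb hx hy
  have hrden := denom_eq' x y a
  set r := ‖a - (1/2:ℝ)•(x+y)‖ with hr
  have hr0 : 0 ≤ r := norm_nonneg _
  have habs : |fieldEval f Df x a - fieldEval f Df y a|
      ≤ M/3*‖x-y‖^2 + (M*‖x-y‖)*r := by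
    rw [hdecomp]
    refine (abs_add_le _ _).trans (add_le_add hE ?_)
    calc |⟪Df x - Df y, a - (1/2:ℝ)•(x+y)⟫| ≤ ‖Df x - Df y‖ * r :=
          abs_real_inner_le_norm _ _
      _ ≤ (M*‖x-y‖) * r := mul_le_mul_of_nonneg_right hs hr0
  rw [hrden]
  nlinarith [mul_nonneg hM0 (sq_nonneg (‖x-y‖ - 4*r)), sq_nonneg ‖x-y‖,
    mul_nonneg hM0 (sq_nonneg ‖x-y‖), mul_nonneg hM0 (mul_nonneg hd.le hr0)]
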